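/- Let S be a semitopological semigroup and X a norm-closed linear subspace of ℓ∞(S) containing the constant functions and invariant under all left and right translations. Suppose that S acts on a nonempty weakly compact subset K of a Banach space E so that the action is weakly separately continuous and there exists y ∈ K such that for every weakly continuous complex-valued function f on K, the function s ↦ f(s·y) belongs to X. If X has a left invariant mean, then there exists a nonempty weakly compact and norm-separable subset K₀ of K such that sK₀ = {s·x : x ∈ K₀} = K₀ for every s ∈ S. -/

import Mathlib

open scoped BoundedContinuousFunction

/-- A semitopological semigroup: a semigroup with a topology in which
multiplication is separately continuous. -/
class SemitopoSemigroup (S : Type*) [Semigroup S] [TopologicalSpace S] : Prop where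
  cont_left : ∀ t : S, Continuous fun s : S => t * s
  cont_right : ∀ t : S, Continuous fun s : S => s * t

section Ell

variable {S : Type*}

/-- Left translation: `(l_s f)(t) = f (s * t)`. -/
def lTrans [Mul S] (s : S) (f : S → ℂ) : S → ℂ := fun t => f (s * t)

/-- Right translation: `(r_s f)(t) = f (t * s)`. -/
def rTrans [Mul S] (s : S) (f : S → ℂ) : S → ℂ := fun t => f (t * s)

/-- A bounded complex-valued function, i.e. an element of `ℓ^∞(S)`. -/
def BddFun (f : S → ℂ) : Prop := ∃ C : ℝ, ∀ t, ‖f t‖ ≤ C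

/-- The supremum norm on `ℓ^∞(S)`. -/
noncomputable def supNorm (f : S → ℂ) : ℝ := ⨆ t, ‖f t‖

/-- `X` is a norm-closed linear subspace of `ℓ^∞(S)` containing the constants and
invariant under all left and right translations. -/
structure IsTransInvSubspace [Semigroup S] (X : Set (S → ℂ)) : Prop where
  bdd : ∀ f ∈ X, BddFun f
  add_mem : ∀ f ∈ X, ∀ g ∈ X, f + g ∈ X
  smul_mem : ∀ (c : ℂ), ∀ f ∈ X, c • f ∈ X
  const_mem : ∀ c : ℂ, (fun _ : S => c) ∈ X
  normClosed : ∀ f : S → ℂ, BddFun f →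
    (∀ ε > 0, ∃ g ∈ X, ∀ t, ‖f t - g t‖ ≤ ε) → f ∈ X
  lTrans_mem : ∀ (s : S), ∀ f ∈ X, lTrans s f ∈ X
  rTrans_mem : ∀ (s : S), ∀ f ∈ X, rTrans s f ∈ X

/-- `m` is a left invariant mean on `X`: a linear functional with `‖m‖ = m 1 = 1`
which is invariant under left translations. -/
structure IsLIM [Semigroup S] (X : Set (S → ℂ)) (m : (S → ℂ) → ℂ) : Prop where
  add : ∀ f ∈ X, ∀ g ∈ X, m (f + g) = m f + m g
  smul : ∀ (c : ℂ), ∀ f ∈ X, m (c • f) = c * m f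
  norm_le : ∀ f ∈ X, ‖m f‖ ≤ supNorm f
  map_one : m (fun _ : S => (1 : ℂ)) = 1
  left_inv : ∀ (s : S), ∀ f ∈ X, m (lTrans s f) = m f

/-- `X` has a left invariant mean. -/
def HasLIM [Semigroup S] (X : Set (S → ℂ)) : Prop := ∃ m, IsLIM X m

end Ell

/-- The weak topology on a normed space `E` over `𝕜`. -/
noncomputable def weakTop (𝕜 E : Type*) [NontriviallyNormedField 𝕜] [NormedAddCommGroup E]
    [NormedSpace 𝕜 E] : TopologicalSpace E :=
  ⨅ φ : E →L[𝕜] 𝕜, TopologicalSpace.induced φ inferInstance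

section Semitopo

variable {S : Type*} [Semigroup S] [TopologicalSpace S] [SemitopoSemigroup S]

/-- Left translation as a map on `C(S)`, the bounded continuous functions. -/
noncomputable def lTransB (s : S) (F : S →ᵇ ℂ) : S →ᵇ ℂ :=
  F.compContinuous ⟨fun t => s * t, SemitopoSemigroup.cont_left s⟩

/-- Right translation as a map on `C(S)`, the bounded continuous functions. -/
noncomputable def rTransB (s : S) (F : S →ᵇ ℂ) : S →ᵇ ℂ :=
  F.compContinuous ⟨fun t => t * s, SemitopoSemigroup.cont_right s⟩

/-- `F ∈ C(S)` is weakly almost periodic: its left orbit is relatively compact in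
the weak topology of `C(S)`. -/
def IsWAPb (F : S →ᵇ ℂ) : Prop :=
  @IsCompact _ (weakTop ℂ (S →ᵇ ℂ))
    (@closure _ (weakTop ℂ (S →ᵇ ℂ)) (Set.range fun s => lTransB s F))

/-- `F ∈ C(S)` is almost periodic: its left orbit is relatively compact in
the norm topology of `C(S)`. -/
def IsAPb (F : S →ᵇ ℂ) : Prop :=
  IsCompact (closure (Set.range fun s => lTransB s F))

/-- `F ∈ C(S)` is left uniformly continuous: `s ↦ l_s F` is norm continuous. -/
def IsLUCb (F : S →ᵇ ℂ) : Prop := Continuous fun s => lTransB s F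

/-- `WAP(S)` as a subset of `ℓ^∞(S)`. -/
def WAPset (S : Type*) [Semigroup S] [TopologicalSpace S] [SemitopoSemigroup S] :
    Set (S → ℂ) := {f | ∃ F : S →ᵇ ℂ, ⇑F = f ∧ IsWAPb F}

/-- `AP(S)` as a subset of `ℓ^∞(S)`. -/
def APset (S : Type*) [Semigroup S] [TopologicalSpace S] [SemitopoSemigroup S] :
    Set (S → ℂ) := {f | ∃ F : S →ᵇ ℂ, ⇑F = f ∧ IsAPb F}

/-- `LUC(S)` as a subset of `ℓ^∞(S)`. -/
def LUCset (S : Type*) [Semigroup S] [TopologicalSpace S] [SemitopoSemigroup S] :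
    Set (S → ℂ) := {f | ∃ F : S →ᵇ ℂ, ⇑F = f ∧ IsLUCb F}

end Semitopo

section Action

variable {S : Type*} {E : Type*} [NormedAddCommGroup E] [NormedSpace ℝ E]

/-- `act` is an action of the semigroup `S` on the set `K`. -/
def IsActionOn [Semigroup S] (act : S → E → E) (K : Set E) : Prop :=
  (∀ s : S, Set.MapsTo (act s) K K) ∧
    ∀ s s' : S, ∀ x ∈ K, act s (act s' x) = act (s * s') x

/-- The action is nonexpansive on `K`. -/
def NonexpansiveOn (act : S → E → E) (K : Set E) : Prop :=
  ∀ s : S, ∀ x ∈ K, ∀ y ∈ K, ‖act s x - act s y‖ ≤ ‖x - y‖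

/-- The action is weakly separately continuous on `K`. -/
def WeaklySepContOn [TopologicalSpace S] (act : S → E → E) (K : Set E) : Prop :=
  (∀ s : S, @ContinuousOn E E (weakTop ℝ E) (weakTop ℝ E) (act s) K) ∧
    (∀ x ∈ K, @Continuous S E _ (weakTop ℝ E) fun s => act s x)

/-- The action is jointly weakly continuous on `K`. -/
def JointlyWeaklyContOn [TopologicalSpace S] (act : S → E → E) (K : Set E) : Prop :=
  @ContinuousOn (S × E) E (@instTopologicalSpaceProd S E _ (weakTop ℝ E)) (weakTop ℝ E)
    (fun p => act p.1 p.2) (Set.univ ×ˢ K)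

/-- The action is weakly equicontinuous on `K`: the family `{x ↦ s • x : s ∈ S}` is
equicontinuous for the weak topology on `K`. -/
def WeaklyEquicontOn (act : S → E → E) (K : Set E) : Prop :=
  ∀ x ∈ K, ∀ W ∈ @nhds E (weakTop ℝ E) 0,
    ∃ U ∈ @nhdsWithin E (weakTop ℝ E) x K, ∀ y ∈ U, ∀ s : S, act s y - act s x ∈ W

/-- The action is weakly quasi-equicontinuous on `K`: every map in the closure of
`{x ↦ s • x : s ∈ S}` in `K^K` (with `K` carrying the weak topology) is continuous. -/
def WeaklyQuasiEquicontOn (act : S → E → E) (K : Set E) : Prop :=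
  ∀ T ∈ @closure (↥K → ↥K)
      (@Pi.topologicalSpace ↥K (fun _ => ↥K)
        (fun _ => TopologicalSpace.induced Subtype.val (weakTop ℝ E)))
      {F : ↥K → ↥K | ∃ s : S, ∀ x : ↥K, (F x : E) = act s x},
    @Continuous ↥K ↥K (TopologicalSpace.induced Subtype.val (weakTop ℝ E))
      (TopologicalSpace.induced Subtype.val (weakTop ℝ E)) T

end Action
section Part1
variable {E : Type*} [NormedAddCommGroup E] [NormedSpace ℝ E]

theorem weakTop_cont (φ : E →L[ℝ] ℝ) :
    @Continuous E ℝ (weakTop ℝ E) _ φ := by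
  rw [@continuous_iff_le_induced]
  exact iInf_le _ φ

theorem weakTop_t2 : @T2Space E (weakTop ℝ E) := by
  letI : TopologicalSpace E := weakTop ℝ E
  constructor
  intro x y hxy
  obtain ⟨g, -, hg2⟩ := exists_dual_vector ℝ (x - y) (norm_ne_zero_iff.2 (sub_ne_zero.2 hxy))
  have hgx : g x ≠ g y := by
    intro h
    have h0 : g (x - y) = 0 := by rw [map_sub, h, sub_self]
    rw [h0] at hg2
    have : ‖x - y‖ = 0 := RCLike.ofReal_eq_zero.mp hg2.symm
    exact hxy (by simpa [sub_eq_zero] using norm_eq_zero.mp this)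
  exact separated_by_continuous (weakTop_cont g) hgx

end Part1
set_option linter.unusedSectionVars false

section Part2
variable {S : Type*} [Semigroup S] [TopologicalSpace S]
variable {E : Type*} [NormedAddCommGroup E] [NormedSpace ℝ E]

/-- real-valued weakly continuous on `K` -/
def WCO (K : Set E) (f : E → ℝ) : Prop := @ContinuousOn E ℝ (weakTop ℝ E) _ f K

variable {X : Set (S → ℂ)} {K : Set E}

theorem WCO.const {c : ℝ} : WCO K (fun _ => c) := by
  letI : TopologicalSpace E := weakTop ℝ E
  exact continuousOn_const

theorem WCO.add {f g : E → ℝ} (hf : WCO K f) (hg : WCO K g) :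
    WCO K (fun z => f z + g z) := by
  letI : TopologicalSpace E := weakTop ℝ E
  exact ContinuousOn.add hf hg

theorem WCO.mul {f g : E → ℝ} (hf : WCO K f) (hg : WCO K g) :
    WCO K (fun z => f z * g z) := by
  letI : TopologicalSpace E := weakTop ℝ E
  exact ContinuousOn.mul hf hg

theorem WCO.sum {ι' : Type*} (t : Finset ι') (F : ι' → E → ℝ) (hF : ∀ c ∈ t, WCO K (F c)) :
    WCO K (fun z => ∑ c ∈ t, F c z) := by
  letI : TopologicalSpace E := weakTop ℝ E
  exact continuousOn_finset_sum t hF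

theorem WCO.finprod {ι' : Type*} (t : Finset ι') (F : ι' → E → ℝ) (hF : ∀ c ∈ t, WCO K (F c)) :
    WCO K (fun z => ∏ c ∈ t, F c z) := by
  classical
  induction t using Finset.induction with
  | empty => simpa using (WCO.const (K := K) (c := 1))
  | insert a t' hni ih =>
    have h1 : (fun z => ∏ c ∈ insert a t', F c z) = fun z => F a z * ∏ c ∈ t', F c z := by
      funext z; rw [Finset.prod_insert hni]
    rw [h1]
    exact (hF a (Finset.mem_insert_self a t')).mul
      (ih (fun c hc => hF c (Finset.mem_insert_of_mem hc)))

/-- Bundle of the standing hypotheses. -/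
structure MuHyp (X : Set (S → ℂ)) (m : (S → ℂ) → ℂ) (act : S → E → E) (K : Set E)
    (y : ↥K) : Prop where
  hm : IsLIM X m
  hX : IsTransInvSubspace X
  hy : ∀ f : E → ℂ, @ContinuousOn E ℂ (weakTop ℝ E) _ f K → (fun s : S => f (act s ↑y)) ∈ X
  hact : IsActionOn act K
  hsc : WeaklySepContOn act K
  hcomp : @IsCompact E (weakTop ℝ E) K
  hS : Nonempty S

variable {m : (S → ℂ) → ℂ} {act : S → E → E} {y : ↥K}

/-- The induced mean on real-valued weakly continuous functions. -/
noncomputable def MuF (m : (S → ℂ) → ℂ) (act : S → E → E) (y : ↥K) (f : E → ℝ) : ℝ :=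
  (m (fun s => ((f (act s ↑y) : ℝ) : ℂ))).re

theorem MuHyp.orbR_mem (hq : MuHyp X m act K y) {f : E → ℝ} (hf : WCO K f) :
    (fun s : S => ((f (act s ↑y) : ℝ) : ℂ)) ∈ X := by
  have h2 : @ContinuousOn E ℂ (weakTop ℝ E) _ (fun z => ((f z : ℝ) : ℂ)) K := by
    letI : TopologicalSpace E := weakTop ℝ E
    exact Complex.continuous_ofReal.comp_continuousOn hf
  exact hq.hy _ h2

theorem MuHyp.constC_mem (hq : MuHyp X m act K y) (c : ℂ) : (fun _ : S => c) ∈ X := by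
  have h2 : @ContinuousOn E ℂ (weakTop ℝ E) _ (fun _ => c) K := by
    letI : TopologicalSpace E := weakTop ℝ E
    exact continuousOn_const
  exact hq.hy _ h2

theorem MuHyp.norm_m_le (hq : MuHyp X m act K y) {g : S → ℂ} (hg : g ∈ X) {B : ℝ}
    (hB : ∀ s, ‖g s‖ ≤ B) : ‖m g‖ ≤ B := by
  haveI := hq.hS
  exact (hq.hm.norm_le g hg).trans (ciSup_le hB)

theorem MuHyp.mu_const (hq : MuHyp X m act K y) (c : ℝ) : MuF m act y (fun _ => c) = c := by
  have h1 : (fun s : S => ((c : ℝ) : ℂ)) = (c : ℂ) • (fun _ : S => (1 : ℂ)) := by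
    funext s; simp
  unfold MuF
  rw [h1, hq.hm.smul _ _ (hq.constC_mem 1), hq.hm.map_one, mul_one, Complex.ofReal_re]

theorem MuHyp.mu_add (hq : MuHyp X m act K y) {f g : E → ℝ} (hf : WCO K f) (hg : WCO K g) :
    MuF m act y (fun z => f z + g z) = MuF m act y f + MuF m act y g := by
  have h1 : (fun s : S => ((f (act s ↑y) + g (act s ↑y) : ℝ) : ℂ))
      = (fun s : S => ((f (act s ↑y) : ℝ) : ℂ)) + (fun s : S => ((g (act s ↑y) : ℝ) : ℂ)) := by
    funext s; push_cast; rfl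
  unfold MuF
  rw [h1, hq.hm.add _ (hq.orbR_mem hf) _ (hq.orbR_mem hg), Complex.add_re]

theorem MuHyp.mu_smul (hq : MuHyp X m act K y) (c : ℝ) {f : E → ℝ} (hf : WCO K f) :
    MuF m act y (fun z => c * f z) = c * MuF m act y f := by
  have h1 : (fun s : S => ((c * f (act s ↑y) : ℝ) : ℂ))
      = (c : ℂ) • (fun s : S => ((f (act s ↑y) : ℝ) : ℂ)) := by
    funext s; push_cast; simp
  unfold MuF
  rw [h1, hq.hm.smul _ _ (hq.orbR_mem hf)]
  simp [Complex.mul_re]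

theorem MuHyp.mu_finsum (hq : MuHyp X m act K y) {ι' : Type*} (t : Finset ι') (F : ι' → E → ℝ)
    (hF : ∀ c ∈ t, WCO K (F c)) :
    MuF m act y (fun z => ∑ c ∈ t, F c z) = ∑ c ∈ t, MuF m act y (F c) := by
  classical
  induction t using Finset.induction with
  | empty => simpa using hq.mu_const 0
  | insert a t' hni ih =>
    have h1 : (fun z => ∑ c ∈ insert a t', F c z) = fun z => F a z + ∑ c ∈ t', F c z := by
      funext z; rw [Finset.sum_insert hni]
    have hFa := hF a (Finset.mem_insert_self a t')
    have hFt : ∀ c ∈ t', WCO K (F c) := fun c hc => hF c (Finset.mem_insert_of_mem hc)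
    rw [h1, hq.mu_add hFa (WCO.sum t' F hFt), ih hFt, Finset.sum_insert hni]

theorem MuHyp.mu_bounds (hq : MuHyp X m act K y) {f : E → ℝ} {B : ℝ}
    (h0 : ∀ z ∈ K, 0 ≤ f z) (hB : ∀ z ∈ K, f z ≤ B) (hf : WCO K f) :
    0 ≤ MuF m act y f ∧ MuF m act y f ≤ B := by
  set g : S → ℂ := fun s => ((f (act s ↑y) : ℝ) : ℂ) with hgdef
  have hgX : g ∈ X := hq.orbR_mem hf
  have hcX : ((-(B / 2) : ℂ)) • (fun _ : S => (1 : ℂ)) ∈ X :=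
    hq.hX.smul_mem _ _ (hq.constC_mem 1)
  have hsumX : g + ((-(B / 2) : ℂ)) • (fun _ : S => (1 : ℂ)) ∈ X := hq.hX.add_mem _ hgX _ hcX
  have hval : m (g + ((-(B / 2) : ℂ)) • (fun _ : S => (1 : ℂ))) = m g - (B / 2 : ℂ) := by
    rw [hq.hm.add _ hgX _ hcX, hq.hm.smul _ _ (hq.constC_mem 1), hq.hm.map_one, mul_one]
    ring
  have hbnd : ‖m g - (B / 2 : ℂ)‖ ≤ B / 2 := by
    rw [← hval]
    refine hq.norm_m_le hsumX ?_
    intro s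
    have h3 : 0 ≤ f (act s ↑y) := h0 _ (hq.hact.1 s y.2)
    have h4 : f (act s ↑y) ≤ B := hB _ (hq.hact.1 s y.2)
    have h5 : (g + ((-(B / 2) : ℂ)) • (fun _ : S => (1 : ℂ))) s
        = ((f (act s ↑y) - B / 2 : ℝ) : ℂ) := by
      simp [hgdef]; push_cast; ring
    rw [h5, Complex.norm_real, Real.norm_eq_abs, abs_le]
    constructor <;> linarith
  have habs : |(m g).re - B / 2| ≤ B / 2 := by
    have h6 : (m g - (B / 2 : ℂ)).re = (m g).re - B / 2 := by simp
    calc |(m g).re - B / 2| = |(m g - (B / 2 : ℂ)).re| := by rw [h6]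
      _ ≤ ‖m g - (B / 2 : ℂ)‖ := Complex.abs_re_le_norm _
      _ ≤ B / 2 := hbnd
  rw [abs_le] at habs
  unfold MuF
  exact ⟨by linarith [habs.1], by linarith [habs.2]⟩

theorem MuHyp.mu_mono (hq : MuHyp X m act K y) {f g : E → ℝ} {B : ℝ}
    (hf : WCO K f) (hg : WCO K g)
    (h0 : ∀ z ∈ K, 0 ≤ f z) (h1 : ∀ z ∈ K, f z ≤ g z) (hB : ∀ z ∈ K, g z ≤ B) :
    MuF m act y f ≤ MuF m act y g := by
  have hsub : WCO K (fun z => g z - f z) := by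
    letI : TopologicalSpace E := weakTop ℝ E
    exact ContinuousOn.sub hg hf
  have h2 : (fun z => f z + (g z - f z)) = g := by funext z; ring
  have h3 := hq.mu_add hf hsub
  rw [h2] at h3
  have h4 := (hq.mu_bounds (f := fun z => g z - f z) (B := B)
    (fun z hz => by linarith [h1 z hz])
    (fun z hz => by linarith [h0 z hz, hB z hz]) hsub).1
  linarith

theorem MuHyp.mu_pos_witness (hq : MuHyp X m act K y) {f : E → ℝ} (h0 : ∀ z ∈ K, 0 ≤ f z)
    (hpos : 0 < MuF m act y f) : ∃ z ∈ K, 0 < f z := by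
  by_contra hcon
  push_neg at hcon
  have h1 : (fun s : S => ((f (act s ↑y) : ℝ) : ℂ)) = (0 : ℂ) • (fun _ : S => (1 : ℂ)) := by
    funext s
    have h2 := hcon _ (hq.hact.1 s y.2)
    have h3 := h0 _ (hq.hact.1 s y.2)
    have h4 : f (act s ↑y) = 0 := le_antisymm h2 h3
    simp [h4]
  unfold MuF at hpos
  rw [h1, hq.hm.smul _ _ (hq.constC_mem 1)] at hpos
  simp at hpos

theorem MuHyp.mu_comp_act (hq : MuHyp X m act K y) (s : S) {f : E → ℝ} (hf : WCO K f) :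
    MuF m act y (fun z => f (act s z)) = MuF m act y f := by
  have hXf := hq.orbR_mem hf
  have h1 : (fun t : S => ((f (act s (act t ↑y)) : ℝ) : ℂ))
      = lTrans s (fun t : S => ((f (act t ↑y) : ℝ) : ℂ)) := by
    funext t; unfold lTrans
    rw [hq.hact.2 s t ↑y y.2]
  unfold MuF
  rw [show (fun t : S => ((f (act s (act t ↑y)) : ℝ) : ℂ))
      = lTrans s (fun t : S => ((f (act t ↑y) : ℝ) : ℂ)) from h1,
    hq.hm.left_inv s _ hXf]

end Part2
section Part3
variable {S : Type*} [Semigroup S] [TopologicalSpace S]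
variable {E : Type*} [NormedAddCommGroup E] [NormedSpace ℝ E]
variable {X : Set (S → ℂ)} {K : Set E} {m : (S → ℂ) → ℂ} {act : S → E → E} {y : ↥K}

theorem wkClosed_of_compact {A : Set E} (h : @IsCompact E (weakTop ℝ E) A) :
    @IsClosed E (weakTop ℝ E) A := by
  letI : TopologicalSpace E := weakTop ℝ E
  haveI : T2Space E := weakTop_t2
  exact h.isClosed

theorem urysohnK (hcomp : @IsCompact E (weakTop ℝ E) K) (A B : Set E)
    (hA : @IsClosed E (weakTop ℝ E) A) (hB : @IsClosed E (weakTop ℝ E) B)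
    (hAK : A ⊆ K) (hdisj : ∀ z ∈ A, z ∉ B) :
    ∃ f : E → ℝ, WCO K f ∧ (∀ z, 0 ≤ f z ∧ f z ≤ 1) ∧ (∀ z ∈ A, f z = 1) ∧
      (∀ z ∈ K, z ∈ B → f z = 0) := by
  classical
  letI : TopologicalSpace E := weakTop ℝ E
  haveI : T2Space E := weakTop_t2
  haveI : CompactSpace ↥K := isCompact_iff_compactSpace.mp hcomp
  have hA' : IsClosed (Subtype.val ⁻¹' A : Set ↥K) := hA.preimage continuous_subtype_val
  have hB' : IsClosed (Subtype.val ⁻¹' B : Set ↥K) := hB.preimage continuous_subtype_val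
  have hd : Disjoint (Subtype.val ⁻¹' B : Set ↥K) (Subtype.val ⁻¹' A) := by
    rw [Set.disjoint_left]
    rintro ⟨z, hz⟩ hzB hzA
    exact hdisj z hzA hzB
  obtain ⟨F, hF0, hF1, hF01⟩ := exists_continuous_zero_one_of_isClosed hB' hA' hd
  refine ⟨fun z => if h : z ∈ K then F ⟨z, h⟩ else 0, ?_, ?_, ?_, ?_⟩
  · apply continuousOn_iff_continuous_restrict.mpr
    have h1 : Set.domRestrict K (fun z => if h : z ∈ K then F ⟨z, h⟩ else 0) = F := by
      funext w
      rw [Set.domRestrict_apply, dif_pos w.2]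
    rw [h1]
    exact F.continuous
  · intro z
    by_cases h : z ∈ K
    · simp only [dif_pos h]
      exact ⟨(hF01 _).1, (hF01 _).2⟩
    · simp [dif_neg h]
  · intro z hz
    have hzK := hAK hz
    simp only [dif_pos hzK]
    simpa using hF1 (show (⟨z, hzK⟩ : ↥K) ∈ Subtype.val ⁻¹' A from hz)
  · intro z hzK hzB
    simp only [dif_pos hzK]
    simpa using hF0 (show (⟨z, hzK⟩ : ↥K) ∈ Subtype.val ⁻¹' B from hzB)

theorem level_compact (hcomp : @IsCompact E (weakTop ℝ E) K) {g : E → ℝ} (hg : WCO K g)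
    (t : ℝ) : @IsCompact E (weakTop ℝ E) {z | z ∈ K ∧ t ≤ g z} := by
  letI : TopologicalSpace E := weakTop ℝ E
  haveI : CompactSpace ↥K := isCompact_iff_compactSpace.mp hcomp
  have h1 : IsClosed (Set.restrict K g ⁻¹' Set.Ici t) :=
    (isClosed_Ici).preimage hg.restrict
  have h2 : IsCompact (Set.restrict K g ⁻¹' Set.Ici t) := h1.isCompact
  have h3 : {z | z ∈ K ∧ t ≤ g z} = Subtype.val '' (Set.restrict K g ⁻¹' Set.Ici t) := by
    ext z
    constructor
    · rintro ⟨hzK, hzt⟩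
      exact ⟨⟨z, hzK⟩, hzt, rfl⟩
    · rintro ⟨⟨w, hw⟩, hmem, rfl⟩
      exact ⟨hw, hmem⟩
  rw [h3]
  exact h2.image continuous_subtype_val

/-- `U` is null for the mean. -/
def NullO (m : (S → ℂ) → ℂ) (act : S → E → E) (y : ↥K) (U : Set E) : Prop :=
  ∀ f : E → ℝ, WCO K f → (∀ z, 0 ≤ f z ∧ f z ≤ 1) → (∀ z ∈ K, z ∉ U → f z = 0) →
    MuF m act y f = 0

/-- The support of the mean. -/
def SuppM (m : (S → ℂ) → ℂ) (act : S → E → E) (y : ↥K) : Set E :=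
  {x | x ∈ K ∧ ∀ U : Set E, @IsOpen E (weakTop ℝ E) U → x ∈ U → ¬ NullO m act y U}

theorem supp_sub : SuppM m act y ⊆ K := fun _ hx => hx.1

theorem supp_compact (hcomp : @IsCompact E (weakTop ℝ E) K) :
    @IsCompact E (weakTop ℝ E) (SuppM m act y) := by
  letI : TopologicalSpace E := weakTop ℝ E
  haveI : T2Space E := weakTop_t2
  have hKc : IsClosed K := hcomp.isClosed
  have h1 : SuppM m act y = K ∩ (⋃₀ {U : Set E | IsOpen U ∧ NullO m act y U})ᶜ := by
    ext x
    simp only [SuppM, Set.mem_setOf_eq, Set.mem_inter_iff, Set.mem_compl_iff, Set.mem_sUnion]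
    constructor
    · rintro ⟨hxK, hx⟩
      exact ⟨hxK, fun ⟨U, ⟨hU1, hU2⟩, hxU⟩ => hx U hU1 hxU hU2⟩
    · rintro ⟨hxK, hx⟩
      exact ⟨hxK, fun U hU1 hxU hU2 => hx ⟨U, ⟨hU1, hU2⟩, hxU⟩⟩
  rw [h1]
  exact hcomp.of_isClosed_subset
    (hKc.inter (isOpen_sUnion (fun U hU => hU.1)).isClosed_compl) Set.inter_subset_left

theorem supp_bump (hq : MuHyp X m act K y) {x : E} (hx : x ∈ SuppM m act y) {U : Set E}
    (hU : @IsOpen E (weakTop ℝ E) U) (hxU : x ∈ U) :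
    ∃ f : E → ℝ, WCO K f ∧ (∀ z, 0 ≤ f z ∧ f z ≤ 1) ∧ (∀ z ∈ K, z ∉ U → f z = 0) ∧
      0 < MuF m act y f := by
  have h1 := hx.2 U hU hxU
  unfold NullO at h1
  push_neg at h1
  obtain ⟨f, h2, h3, h4, h5⟩ := h1
  refine ⟨f, h2, h3, h4, ?_⟩
  have h6 := (hq.mu_bounds (B := 1) (fun z _ => (h3 z).1) (fun z _ => (h3 z).2) h2).1
  exact lt_of_le_of_ne h6 (Ne.symm h5)

theorem mu_vanish_on_supp (hq : MuHyp X m act K y) {g : E → ℝ}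
    (hg : WCO K g) (h01 : ∀ z ∈ K, 0 ≤ g z ∧ g z ≤ 1)
    (hvan : ∀ z ∈ SuppM m act y, g z = 0) :
    MuF m act y g = 0 := by
  classical
  have key : ∀ ε : ℝ, 0 < ε → MuF m act y g ≤ ε := by
    intro ε hε
    letI : TopologicalSpace E := weakTop ℝ E
    haveI : T2Space E := weakTop_t2
    haveI : CompactSpace ↥K := isCompact_iff_compactSpace.mp hq.hcomp
    -- selection of bumps
    have hsel : ∀ w : {v : ↥K // ε ≤ g ↑v}, ∃ b : E → ℝ, WCO K b ∧
        (∀ z, 0 ≤ b z ∧ b z ≤ 1) ∧ b (↑(↑w : ↥K)) = 1 ∧ MuF m act y b = 0 := by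
      rintro ⟨⟨z, hzK⟩, hzε⟩
      have hznotsupp : z ∉ SuppM m act y := by
        intro hzs
        have := hvan z hzs
        simp only at hzε
        rw [this] at hzε
        linarith
      have h2 : ∃ U : Set E, IsOpen U ∧ z ∈ U ∧ NullO m act y U := by
        by_contra h3
        push_neg at h3
        exact hznotsupp ⟨hzK, fun U hU hzU => h3 U hU hzU⟩
      obtain ⟨U, hUopen, hzU, hUnull⟩ := h2
      obtain ⟨b, hb1, hb2, hb3, hb4⟩ := urysohnK hq.hcomp {z} Uᶜ isClosed_singleton
        hUopen.isClosed_compl (Set.singleton_subset_iff.mpr hzK)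
        (fun w hw hwc => hwc (by rwa [Set.mem_singleton_iff.mp hw]))
      refine ⟨b, hb1, hb2, hb3 z rfl, ?_⟩
      exact hUnull b hb1 hb2 (fun w hwK hwU => hb4 w hwK hwU)
    choose b hb1 hb2 hb3 hb4 using hsel
    -- finite subcover
    set C' : Set ↥K := {w : ↥K | ε ≤ g ↑w} with hC'def
    have hC'closed : IsClosed C' := by
      have h5 : C' = Set.restrict K g ⁻¹' Set.Ici ε := rfl
      rw [h5]
      exact (isClosed_Ici).preimage hg.restrict
    have hC'cpt : IsCompact C' := hC'closed.isCompact
    set O : {v : ↥K // ε ≤ g ↑v} → Set ↥K :=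
      fun c => Set.domRestrict K (b c) ⁻¹' Set.Ioi (1 / 2 : ℝ) with hOdef
    have hOopen : ∀ c, IsOpen (O c) := fun c => (isOpen_Ioi).preimage (hb1 c).restrict
    have hcover : C' ⊆ ⋃ c, O c := by
      intro w hw
      exact Set.mem_iUnion.mpr ⟨⟨w, hw⟩, by
        simp only [hOdef, Set.mem_preimage, Set.domRestrict_apply, Set.mem_Ioi]
        rw [hb3 ⟨w, hw⟩]
        norm_num⟩
    obtain ⟨t, ht⟩ := hC'cpt.elim_finite_subcover O hOopen hcover
    -- the dominating function
    set h : E → ℝ := fun z => ∑ c ∈ t, 2 * b c z with hhdef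
    have hwco_each : ∀ c ∈ t, WCO K (fun z => 2 * b c z) :=
      fun c _ => WCO.mul WCO.const (hb1 c)
    have hhwco : WCO K h := WCO.sum t _ hwco_each
    have hh0 : ∀ z, 0 ≤ h z := by
      intro z
      exact Finset.sum_nonneg (fun c _ => by linarith [(hb2 c z).1])
    have hdom : ∀ z ∈ K, g z ≤ ε + h z := by
      intro z hzK
      by_cases hcase : ε ≤ g z
      · obtain ⟨c, hct, hcmem⟩ := Set.mem_iUnion₂.mp (ht (show (⟨z, hzK⟩ : ↥K) ∈ C' from hcase))
        have h6 : (1 / 2 : ℝ) < b c z := by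
          simpa [hOdef] using hcmem
        have h7 : 2 * b c z ≤ h z :=
          Finset.single_le_sum (f := fun c => 2 * b c z)
            (fun d _ => by linarith [(hb2 d z).1]) hct
        have h8 : g z ≤ 1 := (h01 z hzK).2
        linarith
      · linarith [hh0 z]
    have hub : ∀ z ∈ K, ε + h z ≤ ε + 2 * t.card := by
      intro z hzK
      have h9 : h z ≤ ∑ _c ∈ t, (2 : ℝ) :=
        Finset.sum_le_sum (fun c _ => by linarith [(hb2 c z).2])
      rw [Finset.sum_const, nsmul_eq_mul] at h9
      linarith
    have hmono := hq.mu_mono (B := ε + 2 * t.card) hg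
      (WCO.const.add hhwco) (fun z hz => (h01 z hz).1) hdom hub
    have hsum : MuF m act y (fun z => ε + h z) = ε := by
      have h10 := hq.mu_add (f := fun _ => ε) (g := h) WCO.const hhwco
      rw [h10, hq.mu_const ε]
      have h11 := hq.mu_finsum t (fun c => fun z => 2 * b c z) hwco_each
      have h12 : MuF m act y h = ∑ c ∈ t, MuF m act y (fun z => 2 * b c z) := h11
      rw [h12]
      have h13 : ∀ c ∈ t, MuF m act y (fun z => 2 * b c z) = 0 := by
        intro c _
        rw [hq.mu_smul 2 (hb1 c), hb4 c]
        ring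
      rw [Finset.sum_congr rfl h13]
      simp
    rw [hsum] at hmono
    exact hmono
  have hnn := (hq.mu_bounds (B := 1) (fun z hz => (h01 z hz).1) (fun z hz => (h01 z hz).2) hg).1
  by_contra hne
  have hpos : 0 < MuF m act y g := lt_of_le_of_ne hnn (Ne.symm hne)
  have := key (MuF m act y g / 2) (by linarith)
  linarith

theorem supp_nonempty (hq : MuHyp X m act K y) : (SuppM m act y).Nonempty := by
  by_contra h
  rw [Set.not_nonempty_iff_eq_empty] at h
  have h1 := mu_vanish_on_supp hq (g := fun _ => 1) WCO.const
    (fun z _ => by norm_num) (fun z hz => by rw [h] at hz; exact absurd hz (Set.notMem_empty z))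
  rw [hq.mu_const 1] at h1
  norm_num at h1

end Part3
section Part4
variable {S : Type*} [Semigroup S] [TopologicalSpace S]
variable {E : Type*} [NormedAddCommGroup E] [NormedSpace ℝ E]
variable {X : Set (S → ℂ)} {K : Set E} {m : (S → ℂ) → ℂ} {act : S → E → E} {y : ↥K}

theorem WCO.comp_act (hq : MuHyp X m act K y) (s : S) {f : E → ℝ} (hf : WCO K f) :
    WCO K (fun z => f (act s z)) := by
  letI : TopologicalSpace E := weakTop ℝ E
  exact ContinuousOn.comp hf (hq.hsc.1 s) (hq.hact.1 s)

theorem supp_act_subset (hq : MuHyp X m act K y) (s : S) :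
    act s '' SuppM m act y ⊆ SuppM m act y := by
  letI : TopologicalSpace E := weakTop ℝ E
  rintro _ ⟨x, hx, rfl⟩
  refine ⟨hq.hact.1 s hx.1, ?_⟩
  intro W hW hmemW hWnull
  obtain ⟨U', hU'open, hU'eq⟩ := (continuousOn_iff'.mp (hq.hsc.1 s)) W hW
  have hxU' : x ∈ U' := by
    have h1 : x ∈ act s ⁻¹' W ∩ K := ⟨hmemW, hx.1⟩
    rw [hU'eq] at h1
    exact h1.1
  refine hx.2 U' hU'open hxU' ?_
  intro g hgw hg01 hgvan
  have hnn := (hq.mu_bounds (B := 1) (fun z _ => (hg01 z).1) (fun z _ => (hg01 z).2) hgw).1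
  have key : ∀ t : ℝ, 0 < t → MuF m act y g ≤ t := by
    intro t ht
    have hD := level_compact hq.hcomp hgw t
    have hDK : {z | z ∈ K ∧ t ≤ g z} ⊆ K := fun z hz => hz.1
    have hA : @IsCompact E (weakTop ℝ E) (act s '' {z | z ∈ K ∧ t ≤ g z}) :=
      hD.image_of_continuousOn ((hq.hsc.1 s).mono hDK)
    have hAK : act s '' {z | z ∈ K ∧ t ≤ g z} ⊆ K := by
      rintro _ ⟨z, hz, rfl⟩
      exact hq.hact.1 s hz.1
    have hAW : ∀ w ∈ act s '' {z | z ∈ K ∧ t ≤ g z}, w ∉ Wᶜ := by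
      rintro _ ⟨z, hz, rfl⟩ hc
      have hzU' : z ∈ U' := by
        by_contra hzn
        have h2 := hgvan z hz.1 hzn
        linarith [hz.2]
      have h3 : z ∈ U' ∩ K := ⟨hzU', hz.1⟩
      rw [← hU'eq] at h3
      exact hc h3.1
    obtain ⟨f₁, hf1w, hf1b, hf1A, hf1van⟩ := urysohnK hq.hcomp _ Wᶜ
      (wkClosed_of_compact hA) hW.isClosed_compl hAK hAW
    have hf1mu : MuF m act y f₁ = 0 := hWnull f₁ hf1w hf1b (fun z hzK hzW => hf1van z hzK hzW)
    have hcomp1 : WCO K (fun z => f₁ (act s z)) := WCO.comp_act hq s hf1w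
    have hdom : ∀ z ∈ K, g z ≤ t + f₁ (act s z) := by
      intro z hzK
      by_cases hcase : t ≤ g z
      · have h4 : f₁ (act s z) = 1 := hf1A _ ⟨z, ⟨hzK, hcase⟩, rfl⟩
        rw [h4]
        linarith [(hg01 z).2]
      · linarith [(hf1b (act s z)).1]
    have hub : ∀ z ∈ K, t + f₁ (act s z) ≤ t + 1 := by
      intro z _
      linarith [(hf1b (act s z)).2]
    have hmono := hq.mu_mono (B := t + 1) hgw (WCO.const.add hcomp1)
      (fun z hz => (hg01 z).1) hdom hub
    have hval : MuF m act y (fun z => t + f₁ (act s z)) = t := by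
      rw [hq.mu_add (f := fun _ => t) WCO.const hcomp1, hq.mu_const t,
        hq.mu_comp_act s hf1w, hf1mu]
      ring
    rw [hval] at hmono
    exact hmono
  by_contra hne
  have hpos : 0 < MuF m act y g := lt_of_le_of_ne hnn (Ne.symm hne)
  have h5 := key (MuF m act y g / 2) (by linarith)
  linarith

theorem supp_subset_act (hq : MuHyp X m act K y) (s : S) :
    SuppM m act y ⊆ act s '' SuppM m act y := by
  letI : TopologicalSpace E := weakTop ℝ E
  haveI : T2Space E := weakTop_t2
  intro x hx
  by_contra hnot
  have hC : @IsCompact E (weakTop ℝ E) (act s '' SuppM m act y) :=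
    (supp_compact hq.hcomp).image_of_continuousOn ((hq.hsc.1 s).mono supp_sub)
  have hxK := hx.1
  obtain ⟨f, hfw, hfb, hfA, hfvan⟩ := urysohnK hq.hcomp {x} (act s '' SuppM m act y)
    isClosed_singleton (wkClosed_of_compact hC) (Set.singleton_subset_iff.mpr hxK)
    (fun z hz hzc => by rw [Set.mem_singleton_iff.mp hz] at hzc; exact hnot hzc)
  -- g := f ∘ act s vanishes on the support
  have hgw : WCO K (fun z => f (act s z)) := WCO.comp_act hq s hfw
  have hgvan : ∀ z ∈ SuppM m act y, f (act s z) = 0 := by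
    intro z hz
    exact hfvan (act s z) (hq.hact.1 s (supp_sub hz)) ⟨z, hz, rfl⟩
  have hg0 : MuF m act y (fun z => f (act s z)) = 0 :=
    mu_vanish_on_supp hq hgw (fun z _ => hfb (act s z)) hgvan
  have hf0 : MuF m act y f = 0 := by
    rw [← hq.mu_comp_act s hfw]
    exact hg0
  -- but f has positive mean since x ∈ supp
  obtain ⟨U', hU'open, hU'eq⟩ := (continuousOn_iff'.mp hfw) (Set.Ioi (1 / 2 : ℝ)) isOpen_Ioi
  have hxU' : x ∈ U' := by
    have h1 : x ∈ f ⁻¹' Set.Ioi (1 / 2 : ℝ) ∩ K := by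
      constructor
      · have := hfA x rfl
        simp only [Set.mem_preimage, Set.mem_Ioi, this]
        norm_num
      · exact hxK
    rw [hU'eq] at h1
    exact h1.1
  obtain ⟨h, hhw, hhb, hhvan, hhpos⟩ := supp_bump hq hx hU'open hxU'
  have hdom : ∀ z ∈ K, h z ≤ 2 * f z := by
    intro z hzK
    by_cases hcase : z ∈ U'
    · have h2 : z ∈ f ⁻¹' Set.Ioi (1 / 2 : ℝ) ∩ K := by
        rw [hU'eq]
        exact ⟨hcase, hzK⟩
      have h3 : (1 / 2 : ℝ) < f z := h2.1
      linarith [(hhb z).2]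
    · rw [hhvan z hzK hcase]
      linarith [(hfb z).1]
  have hub : ∀ z ∈ K, 2 * f z ≤ 2 := by
    intro z _
    linarith [(hfb z).2]
  have hmono := hq.mu_mono (B := 2) hhw (WCO.mul WCO.const hfw)
    (fun z _ => (hhb z).1) hdom hub
  rw [hq.mu_smul 2 hfw, hf0] at hmono
  linarith

theorem supp_act_eq (hq : MuHyp X m act K y) (s : S) :
    act s '' SuppM m act y = SuppM m act y :=
  le_antisymm (supp_act_subset hq s) (supp_subset_act hq s)

end Part4
section Part5
variable {E : Type*} [NormedAddCommGroup E] [NormedSpace ℝ E]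

/-- rational combinations of an enumeration -/
def ratComb (e : ℕ → E) : Set E :=
  Set.range (fun l : List (ℚ × ℕ) => (l.map (fun p => (p.1 : ℝ) • e p.2)).sum)

theorem ratComb_countable (e : ℕ → E) : (ratComb e).Countable := Set.countable_range _

theorem ratComb_zero (e : ℕ → E) : (0 : E) ∈ ratComb e := ⟨[], by simp⟩

theorem ratComb_mem (e : ℕ → E) (n : ℕ) : e n ∈ ratComb e := ⟨[(1, n)], by simp⟩

theorem ratComb_add (e : ℕ → E) {a b : E} (ha : a ∈ ratComb e) (hb : b ∈ ratComb e) :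
    a + b ∈ ratComb e := by
  obtain ⟨l1, rfl⟩ := ha
  obtain ⟨l2, rfl⟩ := hb
  exact ⟨l1 ++ l2, by simp⟩

theorem ratComb_qsmul (e : ℕ → E) (q : ℚ) {a : E} (ha : a ∈ ratComb e) :
    (q : ℝ) • a ∈ ratComb e := by
  obtain ⟨l, rfl⟩ := ha
  refine ⟨l.map (fun p => (q * p.1, p.2)), ?_⟩
  dsimp only
  rw [List.map_map, List.smul_sum, List.map_map]
  congr 1
  apply List.map_congr_left
  intro p _
  simp only [Function.comp_apply]
  rw [smul_smul]
  push_cast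
  ring_nf

/-- the closure of the rational combinations, as a real submodule -/
noncomputable def ratSpan (e : ℕ → E) : Submodule ℝ E where
  carrier := closure (ratComb e)
  zero_mem' := subset_closure (ratComb_zero e)
  add_mem' := by
    intro a b ha hb
    have h1 : (a, b) ∈ closure (ratComb e ×ˢ ratComb e) := by
      rw [closure_prod_eq]
      exact ⟨ha, hb⟩
    have h2 := image_closure_subset_closure_image
      (f := fun p : E × E => p.1 + p.2) (s := ratComb e ×ˢ ratComb e) continuous_add
    have h4 : a + b ∈ closure ((fun p : E × E => p.1 + p.2) '' (ratComb e ×ˢ ratComb e)) :=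
      h2 ⟨(a, b), h1, rfl⟩
    refine closure_mono ?_ h4
    rintro _ ⟨⟨u, v⟩, ⟨hu, hv⟩, rfl⟩
    exact ratComb_add e hu hv
  smul_mem' := by
    intro r a ha
    have hdense : closure (Set.range ((↑) : ℚ → ℝ)) = Set.univ := Rat.denseRange_cast.closure_eq
    have h1 : (r, a) ∈ closure ((Set.range ((↑) : ℚ → ℝ)) ×ˢ ratComb e) := by
      rw [closure_prod_eq, hdense]
      exact ⟨trivial, ha⟩
    have h2 := image_closure_subset_closure_image
      (f := fun p : ℝ × E => p.1 • p.2) (s := (Set.range ((↑) : ℚ → ℝ)) ×ˢ ratComb e)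
      continuous_smul
    have h4 : r • a ∈ closure
        ((fun p : ℝ × E => p.1 • p.2) '' ((Set.range ((↑) : ℚ → ℝ)) ×ˢ ratComb e)) :=
      h2 ⟨(r, a), h1, rfl⟩
    refine closure_mono ?_ h4
    rintro _ ⟨⟨u, v⟩, ⟨⟨q, rfl⟩, hv⟩, rfl⟩
    exact ratComb_qsmul e q hv

theorem ratSpan_closed (e : ℕ → E) : IsClosed ((ratSpan e : Submodule ℝ E) : Set E) :=
  isClosed_closure

theorem ratSpan_sep (e : ℕ → E) :
    ∃ D : Set E, D.Countable ∧ ((ratSpan e : Submodule ℝ E) : Set E) ⊆ closure D :=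
  ⟨ratComb e, ratComb_countable e, le_refl _⟩

theorem ratSpan_mem (e : ℕ → E) (n : ℕ) : e n ∈ ratSpan e :=
  subset_closure (ratComb_mem e n)

/-- Hahn-Banach: a norm-one functional vanishing on a closed subspace, positive at `x`. -/
theorem hb_dist (V : Submodule ℝ E) (hVc : IsClosed (V : Set E)) (x : E) (hx : x ∉ V) :
    ∃ ψ : E →L[ℝ] ℝ, (∀ v ∈ V, ψ v = 0) ∧ (∀ z : E, |ψ z| ≤ ‖z‖) ∧ 0 < ψ x := by
  haveI : IsClosed (V : Set E) := hVc
  have hxq : (Submodule.Quotient.mk x : E ⧸ V) ≠ 0 := by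
    rw [Ne, Submodule.Quotient.mk_eq_zero]
    exact hx
  obtain ⟨g, hg1, hg2⟩ := exists_dual_vector ℝ (Submodule.Quotient.mk x : E ⧸ V) (norm_ne_zero_iff.2 hxq)
  have hmkb : ∀ z : E, ‖V.mkQ z‖ ≤ 1 * ‖z‖ := by
    intro z
    rw [one_mul]
    exact Submodule.Quotient.norm_mk_le V z
  set mkC : E →L[ℝ] (E ⧸ V) := LinearMap.mkContinuous V.mkQ 1 hmkb with hmkC
  refine ⟨g.comp mkC, ?_, ?_, ?_⟩
  · intro v hv
    have h1 : mkC v = 0 := by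
      simp only [hmkC, LinearMap.mkContinuous_apply, Submodule.mkQ_apply]
      exact (Submodule.Quotient.mk_eq_zero V).mpr hv
    simp [h1]
  · intro z
    have h2 : ‖g (mkC z)‖ ≤ ‖g‖ * ‖mkC z‖ := g.le_opNorm _
    rw [hg1, one_mul] at h2
    have h3 : ‖mkC z‖ ≤ ‖z‖ := by simpa [hmkC] using hmkb z
    calc |(g.comp mkC) z| = ‖g (mkC z)‖ := rfl
      _ ≤ ‖mkC z‖ := h2
      _ ≤ ‖z‖ := h3
  · have h4 : (g.comp mkC) x = ‖(Submodule.Quotient.mk x : E ⧸ V)‖ := by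
      simpa [hmkC] using hg2
    rw [h4]
    exact norm_pos_iff.mpr hxq

end Part5

section Omega1
open Cardinal Ordinal

/-- the first uncountable ordinal, as a type -/
noncomputable abbrev W1 : Type := (Cardinal.aleph 1).ord.ToType

theorem W1_initial_countable (i : W1) : Set.Countable {j : W1 | j < i} := by
  rw [Cardinal.countable_iff_lt_aleph_one]
  exact Cardinal.mk_Iio_ord_toType i

theorem W1_uncountable : ¬ (Set.univ : Set W1).Countable := by
  rw [Cardinal.countable_iff_lt_aleph_one, Cardinal.mk_univ, Cardinal.mk_toType,
    Cardinal.card_ord]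
  exact lt_irrefl _

theorem W1_unbounded {A : Set W1} (hA : ¬ A.Countable) (γ : W1) : ∃ a ∈ A, γ < a := by
  by_contra h
  push_neg at h
  apply hA
  have h1 : A ⊆ {j : W1 | j < γ} ∪ {γ} := by
    intro a ha
    rcases lt_or_eq_of_le (h a ha) with h2 | h2
    · exact Or.inl h2
    · exact Or.inr (by simp [h2])
  exact Set.Countable.mono h1 ((W1_initial_countable γ).union (Set.countable_singleton γ))

theorem W1_pigeonhole {A : Set W1} (hA : ¬ A.Countable) (c : W1 → ℕ × ℕ) :
    ∃ np : ℕ × ℕ, ¬ {i ∈ A | c i = np}.Countable := by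
  by_contra h
  push_neg at h
  apply hA
  have h1 : A = ⋃ np : ℕ × ℕ, {i ∈ A | c i = np} := by
    ext i
    simp only [Set.mem_iUnion, Set.mem_setOf_eq]
    exact ⟨fun hi => ⟨c i, hi, rfl⟩, fun ⟨np, hi, _⟩ => hi⟩
  rw [h1]
  exact Set.countable_iUnion h

theorem W1_diff_countable {A B : Set W1} (hA : ¬ A.Countable) (hB : B.Countable) :
    ¬ (A \ B).Countable := by
  intro h
  apply hA
  refine Set.Countable.mono ?_ (h.union hB)
  intro a ha
  by_cases h2 : a ∈ B
  · exact Set.mem_union_right _ h2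
  · exact Set.mem_union_left _ ⟨ha, h2⟩

end Omega1
section Part6
variable {S : Type*} [Semigroup S] [TopologicalSpace S]
variable {E : Type*} [NormedAddCommGroup E] [NormedSpace ℝ E]
variable {X : Set (S → ℂ)} {K : Set E} {m : (S → ℂ) → ℂ} {act : S → E → E} {y : ↥K}

/-- Cauchy-Schwarz for the mean with weight `h`. -/
theorem mu_cs (hq : MuHyp X m act K y) {h g : E → ℝ} {Bg : ℝ}
    (hh : WCO K h) (hg : WCO K g)
    (hh01 : ∀ z ∈ K, 0 ≤ h z ∧ h z ≤ 1) (hg0 : ∀ z ∈ K, 0 ≤ g z ∧ g z ≤ Bg) :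
    (MuF m act y (fun z => h z * g z)) ^ 2
      ≤ MuF m act y h * MuF m act y (fun z => h z * (g z * g z)) := by
  set a := MuF m act y h with ha
  set b := MuF m act y (fun z => h z * g z) with hb
  set c := MuF m act y (fun z => h z * (g z * g z)) with hc
  have hwhg : WCO K (fun z => h z * g z) := hh.mul hg
  have hwhgg : WCO K (fun z => h z * (g z * g z)) := hh.mul (hg.mul hg)
  have key : ∀ t : ℝ, 0 ≤ a * (t * t) + (2 * b) * t + c := by
    intro t
    have hq1 : (fun z => h z * ((g z + t) * (g z + t)))
        = fun z => (h z * (g z * g z)) + (((2 * t) * (h z * g z)) + ((t * t) * h z)) := by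
      funext z
      ring
    have hw2 : WCO K (fun z => (2 * t) * (h z * g z)) := WCO.const.mul hwhg
    have hw3 : WCO K (fun z => (t * t) * h z) := WCO.const.mul hh
    have hval : MuF m act y (fun z => h z * ((g z + t) * (g z + t)))
        = c + ((2 * t) * b + (t * t) * a) := by
      rw [hq1, hq.mu_add hwhgg (hw2.add hw3), hq.mu_add hw2 hw3,
        hq.mu_smul (2 * t) hwhg, hq.mu_smul (t * t) hh]
    have hwq : WCO K (fun z => h z * ((g z + t) * (g z + t))) :=
      hh.mul ((hg.add WCO.const).mul (hg.add WCO.const))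
    have hnn : 0 ≤ MuF m act y (fun z => h z * ((g z + t) * (g z + t))) := by
      refine (hq.mu_bounds (B := (Bg + |t|) ^ 2) ?_ ?_ hwq).1
      · intro z hz
        have := (hh01 z hz).1
        nlinarith [sq_nonneg (g z + t)]
      · intro z hz
        obtain ⟨hg1, hg2⟩ := hg0 z hz
        obtain ⟨hh1, hh2⟩ := hh01 z hz
        have h5 : |g z + t| ≤ Bg + |t| := by
          have := abs_add_le (g z) t
          rw [abs_of_nonneg hg1] at this
          linarith
        have h6 : (g z + t) * (g z + t) ≤ (Bg + |t|) ^ 2 := by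
          have := abs_nonneg (g z + t)
          nlinarith [le_abs_self (g z + t), neg_abs_le (g z + t)]
        nlinarith [sq_nonneg (g z + t)]
    rw [hval] at hnn
    nlinarith
  have hd := discrim_le_zero key
  rw [discrim] at hd
  nlinarith

theorem uncountable_nonempty {s : Set W1} (h : ¬ s.Countable) : s.Nonempty := by
  rcases Set.eq_empty_or_nonempty s with h1 | h1
  · exact absurd (h1 ▸ Set.countable_empty) h
  · exact h1

theorem W1_nonempty : Nonempty W1 := by
  by_contra h
  apply W1_uncountable
  have h1 : (Set.univ : Set W1) = ∅ := by
    rw [Set.eq_empty_iff_forall_notMem]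
    intro x _
    exact h ⟨x⟩
  rw [h1]
  exact Set.countable_empty

noncomputable def pickW (s : Set W1) : W1 :=
  open scoped Classical in
  if h : s.Nonempty then h.choose else Classical.choice W1_nonempty

theorem pickW_mem {s : Set W1} (h : s.Nonempty) : pickW s ∈ s := by
  rw [pickW]
  rw [dif_pos h]
  exact h.choose_spec

theorem le_countable (γ : W1) : ({β : W1 | β ≤ γ}).Countable := by
  have h1 : {β : W1 | β ≤ γ} ⊆ {β : W1 | β < γ} ∪ {γ} := by
    intro β (hβ : β ≤ γ)
    rcases lt_or_eq_of_le hβ with h2 | h2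
    · exact Or.inl h2
    · exact Or.inr (by simp [h2])
  exact Set.Countable.mono h1 ((W1_initial_countable γ).union (Set.countable_singleton γ))

/-- Greedy extraction of an increasing sequence avoiding countable trap sets. -/
theorem greedy (T : W1 → Set W1) (hT : ∀ γ, (T γ).Countable) {𝔄 : Set W1}
    (h𝔄 : ¬ 𝔄.Countable) :
    ∃ g : ℕ → W1, StrictMono g ∧ (∀ k, g k ∈ 𝔄) ∧ ∀ j k, j < k → g k ∉ T (g j) := by
  classical
  set R : ℕ → Set W1 := fun k =>
    Nat.rec 𝔄 (fun _ Rk => Rk \ ({β | β ≤ pickW Rk} ∪ T (pickW Rk))) k with hR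
  have hRsucc : ∀ k, R (k + 1) = R k \ ({β | β ≤ pickW (R k)} ∪ T (pickW (R k))) :=
    fun k => rfl
  have hRu : ∀ k, ¬ (R k).Countable := by
    intro k
    induction k with
    | zero => exact h𝔄
    | succ n ih =>
      rw [hRsucc n]
      exact W1_diff_countable ih ((le_countable _).union (hT _))
  set g : ℕ → W1 := fun k => pickW (R k) with hg
  have hgmem : ∀ k, g k ∈ R k := fun k => pickW_mem (uncountable_nonempty (hRu k))
  have hRmono : ∀ j k, j ≤ k → R k ⊆ R j := by
    intro j k hjk
    induction k with
    | zero => rw [Nat.le_zero.mp hjk]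
    | succ n ih =>
      rcases Nat.lt_or_ge j (n + 1) with h2 | h2
      · have h3 := ih (Nat.lt_succ_iff.mp h2)
        rw [hRsucc n]
        exact Set.Subset.trans Set.diff_subset h3
      · rw [Nat.le_antisymm hjk h2]
  have hRsub𝔄 : ∀ k, R k ⊆ 𝔄 := fun k => hRmono 0 k (Nat.zero_le k)
  have hkey : ∀ j k, j < k → g k ∈ R j \ ({β | β ≤ g j} ∪ T (g j)) := by
    intro j k hjk
    have h4 : R k ⊆ R (j + 1) := hRmono (j + 1) k hjk
    have h5 := h4 (hgmem k)
    rw [hRsucc j] at h5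
    exact h5
  refine ⟨g, ?_, fun k => hRsub𝔄 k (hgmem k), ?_⟩
  · intro j k hjk
    have h6 := hkey j k hjk
    have h7 : ¬ (g k ≤ g j) := fun hc => h6.2 (Or.inl hc)
    exact lt_of_not_ge h7
  · intro j k hjk
    exact fun hc => (hkey j k hjk).2 (Or.inr hc)

end Part6
section Part7
variable {S : Type*} [Semigroup S] [TopologicalSpace S]
variable {E : Type*} [NormedAddCommGroup E] [NormedSpace ℝ E]
variable {X : Set (S → ℂ)} {K : Set E} {m : (S → ℂ) → ℂ} {act : S → E → E} {y : ↥K}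

/-- One step of the mass-extraction: find a new index whose product with the current
weight keeps uncountably many partners with positive mass. -/
theorem extraction_step (hq : MuHyp X m act K y) (f : W1 → E → ℝ)
    (hf : ∀ i, WCO K (f i)) (hfb : ∀ i, ∀ z ∈ K, 0 ≤ f i z ∧ f i z ≤ 1)
    {𝔄 : Set W1} (h𝔄 : ¬ 𝔄.Countable) {h : E → ℝ} (hh : WCO K h)
    (hh01 : ∀ z ∈ K, 0 ≤ h z ∧ h z ≤ 1) {D : ℝ} (hD : 0 < D)
    (hmem : ∀ β ∈ 𝔄, D ≤ MuF m act y (fun z => h z * f β z)) :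
    ∃ γ ∈ 𝔄, ∃ 𝔄' ⊆ 𝔄, ∃ D' : ℝ, (¬ 𝔄'.Countable) ∧ 0 < D' ∧ (∀ β ∈ 𝔄', γ < β) ∧
      ∀ β ∈ 𝔄', D' ≤ MuF m act y (fun z => (h z * f γ z) * f β z) := by
  classical
  have hwhf : ∀ i : W1, WCO K (fun z => h z * f i z) := fun i => hh.mul (hf i)
  have hwhff : ∀ i j : W1, WCO K (fun z => (h z * f i z) * f j z) :=
    fun i j => (hwhf i).mul (hf j)
  have hb01 : ∀ i : W1, ∀ z ∈ K, 0 ≤ (fun z => h z * f i z) z ∧ (fun z => h z * f i z) z ≤ 1 := by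
    intro i z hz
    obtain ⟨h1, h2⟩ := hh01 z hz
    obtain ⟨h3, h4⟩ := hfb i z hz
    constructor
    · exact mul_nonneg h1 h3
    · calc h z * f i z ≤ 1 * 1 := by apply mul_le_mul h2 h4 h3; norm_num
        _ = 1 := by norm_num
  have hnn2 : ∀ i j : W1, 0 ≤ MuF m act y (fun z => (h z * f i z) * f j z) := by
    intro i j
    refine (hq.mu_bounds (B := 1) ?_ ?_ (hwhff i j)).1
    · intro z hz
      exact mul_nonneg (hb01 i z hz).1 (hfb j z hz).1
    · intro z hz
      calc (h z * f i z) * f j z ≤ 1 * 1 := by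
            apply mul_le_mul (hb01 i z hz).2 (hfb j z hz).2 (hfb j z hz).1
            norm_num
        _ = 1 := by norm_num
  -- main claim : some γ has uncountably many positive partners
  set Tset : W1 → Set W1 :=
    fun γ => {β | β ∈ 𝔄 ∧ γ < β ∧ 0 < MuF m act y (fun z => (h z * f γ z) * f β z)} with hTdef
  have hclaim : ∃ γ ∈ 𝔄, ¬ (Tset γ).Countable := by
    by_contra hall
    push_neg at hall
    set T : W1 → Set W1 := fun γ => if γ ∈ 𝔄 then Tset γ else ∅ with hT2def
    have hTc : ∀ γ, (T γ).Countable := by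
      intro γ
      by_cases hγ : γ ∈ 𝔄
      · simpa [hT2def, hγ] using hall γ hγ
      · simp [hT2def, hγ]
    obtain ⟨g, hgmono, hgA, hgT⟩ := greedy T hTc h𝔄
    have hnull : ∀ j k : ℕ, j < k →
        MuF m act y (fun z => (h z * f (g j) z) * f (g k) z) = 0 := by
      intro j k hjk
      have h5 := hgT j k hjk
      rw [hT2def] at h5
      simp only [if_pos (hgA j)] at h5
      have h6 : ¬ (0 < MuF m act y (fun z => (h z * f (g j) z) * f (g k) z)) := by
        intro hpos
        exact h5 ⟨hgA k, hgmono hjk, hpos⟩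
      exact le_antisymm (not_lt.mp h6) (hnn2 (g j) (g k))
    -- Cauchy-Schwarz contradiction
    set a := MuF m act y h with hadef
    have ha0 : 0 ≤ a :=
      (hq.mu_bounds (B := 1) (fun z hz => (hh01 z hz).1) (fun z hz => (hh01 z hz).2) hh).1
    set N : ℕ := Nat.ceil ((a / D) ^ 2) + 1 with hNdef
    set gsum : E → ℝ := fun z => ∑ k ∈ Finset.range N, f (g k) z with hgsum
    have hgsumw : WCO K gsum := WCO.sum _ _ (fun c _ => hf (g c))
    have hgsum0 : ∀ z ∈ K, 0 ≤ gsum z ∧ gsum z ≤ N := by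
      intro z hz
      constructor
      · exact Finset.sum_nonneg (fun c _ => (hfb (g c) z hz).1)
      · calc gsum z ≤ ∑ _k ∈ Finset.range N, (1 : ℝ) :=
              Finset.sum_le_sum (fun c _ => (hfb (g c) z hz).2)
          _ = N := by simp
    set b := MuF m act y (fun z => h z * gsum z) with hbdef
    have hbval : b = ∑ k ∈ Finset.range N, MuF m act y (fun z => h z * f (g k) z) := by
      rw [hbdef]
      have h7 : (fun z => h z * gsum z) = fun z => ∑ k ∈ Finset.range N, h z * f (g k) z := by
        funext z
        rw [hgsum]
        exact Finset.mul_sum _ _ _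
      rw [h7]
      exact hq.mu_finsum _ _ (fun c _ => hwhf (g c))
    have hblow : (N : ℝ) * D ≤ b := by
      rw [hbval]
      calc (N : ℝ) * D = ∑ _k ∈ Finset.range N, D := by rw [Finset.sum_const]; simp [mul_comm]
        _ ≤ _ := Finset.sum_le_sum (fun c _ => hmem (g c) (hgA c))
    set c := MuF m act y (fun z => h z * (gsum z * gsum z)) with hcdef
    have hcval : c = ∑ j ∈ Finset.range N, ∑ k ∈ Finset.range N,
        MuF m act y (fun z => (h z * f (g j) z) * f (g k) z) := by
      rw [hcdef]
      have h8 : (fun z => h z * (gsum z * gsum z))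
          = fun z => ∑ j ∈ Finset.range N, ∑ k ∈ Finset.range N,
              (h z * f (g j) z) * f (g k) z := by
        funext z
        rw [hgsum]
        dsimp only
        rw [Finset.sum_mul_sum]
        rw [Finset.mul_sum]
        refine Finset.sum_congr rfl (fun j _ => ?_)
        rw [Finset.mul_sum]
        refine Finset.sum_congr rfl (fun k _ => ?_)
        ring
      rw [h8]
      rw [hq.mu_finsum _ _ (fun j _ => WCO.sum _ _ (fun k _ => hwhff (g j) (g k)))]
      exact Finset.sum_congr rfl
        (fun j _ => hq.mu_finsum _ _ (fun k _ => hwhff (g j) (g k)))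
    have hchigh : c ≤ (N : ℝ) * a := by
      rw [hcval]
      have h9 : ∀ j ∈ Finset.range N, ∑ k ∈ Finset.range N,
          MuF m act y (fun z => (h z * f (g j) z) * f (g k) z) ≤ a := by
        intro j hj
        have h10 : ∑ k ∈ Finset.range N,
            MuF m act y (fun z => (h z * f (g j) z) * f (g k) z)
            = MuF m act y (fun z => (h z * f (g j) z) * f (g j) z) := by
          refine Finset.sum_eq_single_of_mem j hj (fun k _ hk => ?_)
          rcases lt_or_gt_of_ne hk with h11 | h11
          · have h12 : (fun z => (h z * f (g j) z) * f (g k) z)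
                = fun z => (h z * f (g k) z) * f (g j) z := by
              funext z; ring
            rw [h12]
            exact hnull k j h11
          · exact hnull j k h11
        rw [h10]
        refine hq.mu_mono (B := 1) (hwhff (g j) (g j)) hh ?_ ?_
          (fun z hz => (hh01 z hz).2)
        · intro z hz
          exact mul_nonneg (hb01 (g j) z hz).1 (hfb (g j) z hz).1
        · intro z hz
          obtain ⟨h13, h14⟩ := hb01 (g j) z hz
          obtain ⟨h15, h16⟩ := hfb (g j) z hz
          calc (h z * f (g j) z) * f (g j) z ≤ (h z * f (g j) z) * 1 :=
                mul_le_mul_of_nonneg_left h16 h13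
            _ = h z * f (g j) z := by ring
            _ ≤ h z * 1 := mul_le_mul_of_nonneg_left h16 (hh01 z hz).1
            _ = h z := by ring
      calc (∑ j ∈ Finset.range N, ∑ k ∈ Finset.range N,
          MuF m act y (fun z => (h z * f (g j) z) * f (g k) z))
          ≤ ∑ _j ∈ Finset.range N, a := Finset.sum_le_sum h9
        _ = (N : ℝ) * a := by rw [Finset.sum_const]; simp [mul_comm]
    have hcs := mu_cs hq (Bg := (N : ℝ)) hh hgsumw hh01 hgsum0
    rw [← hbdef, ← hcdef, ← hadef] at hcs
    -- N * D ≤ b, b^2 ≤ a * c ≤ a * N * a  ⇒  N ≤ (a/D)^2 < N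
    have hN1 : (1 : ℝ) ≤ (N : ℝ) := by
      have h16 : (1 : ℕ) ≤ N := by omega
      exact_mod_cast h16
    have hb0 : 0 ≤ b := le_trans (by positivity) hblow
    have hkey2 : (N : ℝ) * D ^ 2 ≤ a ^ 2 := by
      have hND : (0:ℝ) ≤ (N:ℝ) * D := by positivity
      have h17 : ((N : ℝ) * D) ^ 2 ≤ b ^ 2 := by
        nlinarith [mul_le_mul hblow hblow hND hb0]
      have h18 : b ^ 2 ≤ a * ((N : ℝ) * a) := le_trans hcs
        (mul_le_mul_of_nonneg_left hchigh ha0)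
      nlinarith
    have hle : (N : ℝ) ≤ (a / D) ^ 2 := by
      rw [div_pow, le_div_iff₀ (by positivity)]
      nlinarith
    have hgt : ((a / D) ^ 2 : ℝ) < N := by
      rw [hNdef]
      push_cast
      linarith [Nat.le_ceil ((a / D) ^ 2)]
    linarith
  obtain ⟨γ, hγA, hTu⟩ := hclaim
  -- pigeonhole on the mass level
  have hlev : ∃ k : ℕ, ¬ {β ∈ Tset γ |
      1 / ((k : ℝ) + 1) ≤ MuF m act y (fun z => (h z * f γ z) * f β z)}.Countable := by
    by_contra hall2
    push_neg at hall2
    apply hTu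
    have h19 : Tset γ = ⋃ k : ℕ, {β ∈ Tset γ |
        1 / ((k : ℝ) + 1) ≤ MuF m act y (fun z => (h z * f γ z) * f β z)} := by
      ext β
      simp only [Set.mem_iUnion, Set.mem_setOf_eq]
      constructor
      · intro hβ
        obtain ⟨k, hk⟩ := exists_nat_one_div_lt hβ.2.2
        exact ⟨k, hβ, le_of_lt hk⟩
      · rintro ⟨k, hβ, -⟩
        exact hβ
    rw [h19]
    exact Set.countable_iUnion hall2
  obtain ⟨k, hk⟩ := hlev
  refine ⟨γ, hγA, _, ?_, 1 / ((k : ℝ) + 1), hk, by positivity, ?_, ?_⟩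
  · intro β hβ
    exact hβ.1.1
  · intro β hβ
    exact hβ.1.2.1
  · intro β hβ
    exact hβ.2

end Part7
section Part8
variable {S : Type*} [Semigroup S] [TopologicalSpace S]
variable {E : Type*} [NormedAddCommGroup E] [NormedSpace ℝ E]
variable {X : Set (S → ℂ)} {K : Set E} {m : (S → ℂ) → ℂ} {act : S → E → E} {y : ↥K}

/-- pointwise product over a list of indices -/
def hP (f : W1 → E → ℝ) (l : List W1) : E → ℝ := fun z => (l.map (fun i => f i z)).prod

theorem hP_nil (f : W1 → E → ℝ) : hP f [] = fun _ => 1 := rfl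

theorem hP_append (f : W1 → E → ℝ) (l : List W1) (γ : W1) :
    hP f (l ++ [γ]) = fun z => hP f l z * f γ z := by
  funext z
  simp [hP]

theorem hP_wco {f : W1 → E → ℝ} (hf : ∀ i, WCO K (f i)) (l : List W1) : WCO K (hP f l) := by
  induction l with
  | nil => exact WCO.const
  | cons i l ih =>
    have h1 : hP f (i :: l) = fun z => f i z * hP f l z := by
      funext z
      simp [hP]
    rw [h1]
    exact (hf i).mul ih

theorem hP_bounds {f : W1 → E → ℝ} (hfb : ∀ i, ∀ z ∈ K, 0 ≤ f i z ∧ f i z ≤ 1)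
    (l : List W1) : ∀ z ∈ K, 0 ≤ hP f l z ∧ hP f l z ≤ 1 := by
  induction l with
  | nil => intro z hz; simp [hP]
  | cons i l ih =>
    intro z hz
    have h1 : hP f (i :: l) z = f i z * hP f l z := by simp [hP]
    obtain ⟨h2, h3⟩ := ih z hz
    obtain ⟨h4, h5⟩ := hfb i z hz
    rw [h1]
    constructor
    · exact mul_nonneg h4 h2
    · calc f i z * hP f l z ≤ 1 * 1 := by apply mul_le_mul h5 h3 h2; norm_num
        _ = 1 := by norm_num

/-- invariant for the extraction recursion -/
def ExtInv (m : (S → ℂ) → ℂ) (act : S → E → E) (y : ↥K) (f : W1 → E → ℝ) (A : Set W1)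
    (p : List W1 × Set W1 × ℝ) : Prop :=
  (¬ p.2.1.Countable) ∧ p.2.1 ⊆ A ∧ 0 < p.2.2 ∧ (∀ a ∈ p.1, a ∈ A) ∧
    (∀ β ∈ p.2.1, ∀ a ∈ p.1, a < β) ∧
    (0 < MuF m act y (hP f p.1)) ∧
    (∀ β ∈ p.2.1, p.2.2 ≤ MuF m act y (fun z => hP f p.1 z * f β z))

theorem extraction (hq : MuHyp X m act K y) (f : W1 → E → ℝ) (hf : ∀ i, WCO K (f i))
    (hfb : ∀ i, ∀ z ∈ K, 0 ≤ f i z ∧ f i z ≤ 1) {A : Set W1} (hA : ¬ A.Countable)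
    {ε : ℝ} (hε : 0 < ε) (hmem0 : ∀ i ∈ A, ε ≤ MuF m act y (f i)) :
    ∃ α : ℕ → W1, StrictMono α ∧ (∀ k, α k ∈ A) ∧
      ∀ n : ℕ, 0 < MuF m act y (hP f ((List.range n).map α)) := by
  classical
  have hstep : ∀ st : {p : List W1 × Set W1 × ℝ // ExtInv m act y f A p},
      ∃ st' : {p : List W1 × Set W1 × ℝ // ExtInv m act y f A p},
        ∃ γ ∈ st.val.2.1, st'.val.1 = st.val.1 ++ [γ] := by
    rintro ⟨⟨l, 𝔄, D⟩, hp⟩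
    obtain ⟨hunc, hsubA, hD, hmemA, hlt, hpos, hmass⟩ := hp
    obtain ⟨γ, hγ, 𝔄', hsub', D', hunc', hD', hgt', hmass'⟩ :=
      extraction_step hq f hf hfb hunc (hP_wco hf l) (hP_bounds hfb l) hD hmass
    refine ⟨⟨(l ++ [γ], 𝔄', D'), ?_⟩, γ, hγ, rfl⟩
    refine ⟨hunc', hsub'.trans hsubA, hD', ?_, ?_, ?_, ?_⟩
    · intro a ha
      rcases List.mem_append.mp ha with h1 | h1
      · exact hmemA a h1
      · rw [List.mem_singleton.mp h1]
        exact hsubA hγ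
    · intro β hβ a ha
      rcases List.mem_append.mp ha with h1 | h1
      · exact hlt β (hsub' hβ) a h1
      · rw [List.mem_singleton.mp h1]
        exact hgt' β hβ
    · rw [hP_append]
      exact lt_of_lt_of_le hD (hmass γ hγ)
    · intro β hβ
      have h2 : (fun z => hP f (l ++ [γ]) z * f β z)
          = fun z => (hP f l z * f γ z) * f β z := by
        rw [hP_append]
      rw [h2]
      exact hmass' β hβ
  have hbase : ExtInv m act y f A ([], A, ε) := by
    refine ⟨hA, le_refl _, hε, by simp, by simp, ?_, ?_⟩
    · rw [hP_nil, hq.mu_const 1]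
      norm_num
    · intro β hβ
      have h3 : (fun z => hP f [] z * f β z) = f β := by
        funext z
        rw [hP_nil]
        ring
      rw [h3]
      exact hmem0 β hβ
  set F : {p : List W1 × Set W1 × ℝ // ExtInv m act y f A p} →
      {p : List W1 × Set W1 × ℝ // ExtInv m act y f A p} := fun st => (hstep st).choose with hF
  set u : ℕ → {p : List W1 × Set W1 × ℝ // ExtInv m act y f A p} :=
    fun n => F^[n] ⟨([], A, ε), hbase⟩ with hudef
  have husucc : ∀ n, u (n + 1) = F (u n) := by
    intro n
    rw [hudef]
    exact Function.iterate_succ_apply' F n _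
  have hR : ∀ n, ∃ γ ∈ (u n).val.2.1, (u (n + 1)).val.1 = (u n).val.1 ++ [γ] := by
    intro n
    rw [husucc n]
    exact (hstep (u n)).choose_spec
  choose α hαmem hαeq using hR
  have hlist : ∀ n, (u n).val.1 = (List.range n).map α := by
    intro n
    induction n with
    | zero => simp [hudef]
    | succ k ih =>
      rw [hαeq k, ih, List.range_succ]
      simp
  refine ⟨α, ?_, ?_, ?_⟩
  · intro j k hjk
    have h1 : α k ∈ (u k).val.2.1 := hαmem k
    have h2 : α j ∈ (u k).val.1 := by
      rw [hlist k]
      exact List.mem_map.mpr ⟨j, List.mem_range.mpr hjk, rfl⟩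
    exact (u k).prop.2.2.2.2.1 _ h1 _ h2
  · intro k
    exact (u k).prop.2.1 (hαmem k)
  · intro n
    have h4 := (u n).prop.2.2.2.2.2.1
    rwa [hlist n] at h4

end Part8
section Part9a
variable {S : Type*} [Semigroup S] [TopologicalSpace S]
variable {E : Type*} [NormedAddCommGroup E] [NormedSpace ℝ E]
variable {X : Set (S → ℂ)} {K : Set E} {m : (S → ℂ) → ℂ} {act : S → E → E} {y : ↥K}

noncomputable def pickE (s : Set E) : E :=
  open scoped Classical in
  if h : s.Nonempty then h.choose else 0

theorem pickE_mem {s : Set E} (h : s.Nonempty) : pickE s ∈ s := by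
  rw [pickE]
  rw [dif_pos h]
  exact h.choose_spec

/-- the witness set of a finite family, stage version -/
def ZsetI (K : Set E) (i : W1) (prev : ∀ j, j < i → (E →L[ℝ] ℝ) × ℝ × (E → ℝ))
    (F : Finset W1) : Set E :=
  {w | w ∈ K ∧ ∀ b, ∀ hb : b < i, b ∈ F → 0 < (prev b hb).2.2 w}

/-- the registered generators at stage `i` -/
def genSet (K : Set E) (i : W1) (prev : ∀ j, j < i → (E →L[ℝ] ℝ) × ℝ × (E → ℝ)) : Set E :=
  {z | ∃ F : Finset W1, (∀ b ∈ F, b < i) ∧ z = pickE (ZsetI K i prev F)}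

theorem genSet_countable (K : Set E) (i : W1)
    (prev : ∀ j, j < i → (E →L[ℝ] ℝ) × ℝ × (E → ℝ)) : (genSet K i prev).Countable := by
  have h1 : {F : Finset W1 | ∀ b ∈ F, b < i}.Countable := by
    have h2 := Set.countable_setOf_finite_subset (W1_initial_countable i)
    have h3 : {F : Finset W1 | ∀ b ∈ F, b < i}
        = (fun F : Finset W1 => (F : Set W1)) ⁻¹' {t | t.Finite ∧ t ⊆ {j : W1 | j < i}} := by
      ext F
      simp only [Set.mem_setOf_eq, Set.mem_preimage]
      constructor
      · intro hF
        exact ⟨F.finite_toSet, fun b hb => hF b hb⟩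
      · intro hF b hb
        exact hF.2 hb
    rw [h3]
    exact Set.Countable.preimage h2 Finset.coe_injective
  have h4 : genSet K i prev
      = (fun F : Finset W1 => pickE (ZsetI K i prev F)) '' {F : Finset W1 | ∀ b ∈ F, b < i} := by
    ext z
    simp only [genSet, Set.mem_setOf_eq, Set.mem_image]
    constructor
    · rintro ⟨F, hF, rfl⟩
      exact ⟨F, hF, rfl⟩
    · rintro ⟨F, hF, rfl⟩
      exact ⟨F, hF, rfl⟩
  rw [h4]
  exact Set.Countable.image h1 _

/-- specification of one stage of the transfinite construction -/
def RSpec (m : (S → ℂ) → ℂ) (act : S → E → E) (y : ↥K) (i : W1)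
    (prev : ∀ j, j < i → (E →L[ℝ] ℝ) × ℝ × (E → ℝ))
    (d : (E →L[ℝ] ℝ) × ℝ × (E → ℝ)) : Prop :=
  (∀ w ∈ genSet K i prev, d.1 w = 0) ∧ (∀ z : E, |d.1 z| ≤ ‖z‖) ∧ 0 < d.2.1 ∧
    WCO K d.2.2 ∧ (∀ z, 0 ≤ d.2.2 z ∧ d.2.2 z ≤ 1) ∧
    (∀ z ∈ K, d.1 z ≤ d.2.1 → d.2.2 z = 0) ∧ 0 < MuF m act y d.2.2

noncomputable def Gstep (m : (S → ℂ) → ℂ) (act : S → E → E) (y : ↥K) (i : W1)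
    (prev : ∀ j, j < i → (E →L[ℝ] ℝ) × ℝ × (E → ℝ)) : (E →L[ℝ] ℝ) × ℝ × (E → ℝ) :=
  open scoped Classical in
  if h : ∃ d : (E →L[ℝ] ℝ) × ℝ × (E → ℝ), RSpec m act y i prev d then h.choose
  else (0, 1, fun _ => 0)

noncomputable def GFun (m : (S → ℂ) → ℂ) (act : S → E → E) (y : ↥K) : W1 →
    (E →L[ℝ] ℝ) × ℝ × (E → ℝ) :=
  (IsWellFounded.wf (α := W1) (r := (· < ·))).fix (Gstep m act y)

theorem GFun_eq (i : W1) :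
    GFun m act y i = Gstep m act y i (fun j _ => GFun m act y j) :=
  WellFounded.fix_eq _ _ i

theorem RSpec_exists (hq : MuHyp X m act K y)
    (hns : ¬ TopologicalSpace.IsSeparable (SuppM m act y))
    (i : W1) (prev : ∀ j, j < i → (E →L[ℝ] ℝ) × ℝ × (E → ℝ)) :
    ∃ d : (E →L[ℝ] ℝ) × ℝ × (E → ℝ), RSpec m act y i prev d := by
  have hgc : (genSet K i prev).Countable := genSet_countable K i prev
  obtain ⟨e, he⟩ := (hgc.insert 0).exists_eq_range (Set.insert_nonempty _ _)
  have hVg : genSet K i prev ⊆ (ratSpan e : Submodule ℝ E) := by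
    intro z hz
    have h1 : z ∈ insert (0 : E) (genSet K i prev) := Set.mem_insert_of_mem _ hz
    rw [he] at h1
    obtain ⟨n, rfl⟩ := h1
    exact ratSpan_mem e n
  have hex : ∃ x, x ∈ SuppM m act y ∧ x ∉ (ratSpan e : Submodule ℝ E) := by
    by_contra hcon
    push_neg at hcon
    apply hns
    obtain ⟨D, hDc, hDs⟩ := ratSpan_sep e
    exact ⟨D, hDc, fun x hx => hDs (hcon x hx)⟩
  obtain ⟨x, hxM, hxV⟩ := hex
  obtain ⟨ψ, hψV, hψb, hψx⟩ := hb_dist (ratSpan e) (ratSpan_closed e) x hxV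
  have hO : @IsOpen E (weakTop ℝ E) {z | ψ x / 2 < ψ z} := by
    letI : TopologicalSpace E := weakTop ℝ E
    exact (isOpen_Ioi (a := ψ x / 2)).preimage (weakTop_cont ψ)
  have hxO : x ∈ {z | ψ x / 2 < ψ z} := by
    simp only [Set.mem_setOf_eq]
    linarith
  obtain ⟨f, hf1, hf2, hf3, hf4⟩ := supp_bump hq hxM hO hxO
  refine ⟨(ψ, ψ x / 2, f), ?_, hψb, by linarith, hf1, hf2, ?_, hf4⟩
  · intro w hw
    exact hψV w (hVg hw)
  · intro z hzK hzle
    refine hf3 z hzK ?_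
    simp only [Set.mem_setOf_eq]
    linarith

theorem GFun_spec (hq : MuHyp X m act K y)
    (hns : ¬ TopologicalSpace.IsSeparable (SuppM m act y)) (i : W1) :
    RSpec m act y i (fun j _ => GFun m act y j) (GFun m act y i) := by
  rw [GFun_eq]
  rw [Gstep]
  rw [dif_pos (RSpec_exists hq hns i (fun j _ => GFun m act y j))]
  exact (RSpec_exists hq hns i (fun j _ => GFun m act y j)).choose_spec

end Part9a
section Part9b
variable {S : Type*} [Semigroup S] [TopologicalSpace S]
variable {E : Type*} [NormedAddCommGroup E] [NormedSpace ℝ E]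
variable {X : Set (S → ℂ)} {K : Set E} {m : (S → ℂ) → ℂ} {act : S → E → E} {y : ↥K}

theorem supp_separable (hq : MuHyp X m act K y) :
    TopologicalSpace.IsSeparable (SuppM m act y) := by
  classical
  by_contra hns
  set ψG : W1 → (E →L[ℝ] ℝ) := fun i => (GFun m act y i).1 with hψG
  set rG : W1 → ℝ := fun i => (GFun m act y i).2.1 with hrG
  set fG : W1 → E → ℝ := fun i => (GFun m act y i).2.2 with hfG
  have hspec := fun i => GFun_spec (X := X) hq hns i
  have hker : ∀ i, ∀ w ∈ genSet K i (fun j _ => GFun m act y j), ψG i w = 0 :=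
    fun i => (hspec i).1
  have hψb : ∀ i, ∀ z : E, |ψG i z| ≤ ‖z‖ := fun i => (hspec i).2.1
  have hrpos : ∀ i, 0 < rG i := fun i => (hspec i).2.2.1
  have hfw : ∀ i, WCO K (fG i) := fun i => (hspec i).2.2.2.1
  have hfb : ∀ i, ∀ z : E, 0 ≤ fG i z ∧ fG i z ≤ 1 := fun i => (hspec i).2.2.2.2.1
  have hvan : ∀ i, ∀ z ∈ K, ψG i z ≤ rG i → fG i z = 0 := fun i => (hspec i).2.2.2.2.2.1
  have hfpos : ∀ i, 0 < MuF m act y (fG i) := fun i => (hspec i).2.2.2.2.2.2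
  -- pigeonhole on mass and radius levels
  set c : W1 → ℕ × ℕ := fun i =>
    ((exists_nat_one_div_lt (hfpos i)).choose, (exists_nat_one_div_lt (hrpos i)).choose) with hc
  obtain ⟨⟨n, p⟩, hAunc0⟩ := W1_pigeonhole W1_uncountable c
  set A := {i ∈ (Set.univ : Set W1) | c i = (n, p)} with hAdef
  have hAunc : ¬ A.Countable := hAunc0
  have hAn : ∀ i ∈ A, 1 / ((n : ℝ) + 1) ≤ MuF m act y (fG i) := by
    intro i hi
    have h1 : 1 / (((c i).1 : ℝ) + 1) < MuF m act y (fG i) := by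
      simp only [hc]
      exact (exists_nat_one_div_lt (hfpos i)).choose_spec
    rw [hi.2] at h1
    exact le_of_lt h1
  have hAr : ∀ i ∈ A, 1 / ((p : ℝ) + 1) ≤ rG i := by
    intro i hi
    have h1 : 1 / (((c i).2 : ℝ) + 1) < rG i := by
      simp only [hc]
      exact (exists_nat_one_div_lt (hrpos i)).choose_spec
    rw [hi.2] at h1
    exact le_of_lt h1
  -- extraction of a rich increasing sequence
  obtain ⟨α, hαmono, hαA, hαpos⟩ := extraction hq fG hfw (fun i z _ => hfb i z) hAunc
    (ε := 1 / ((n : ℝ) + 1)) (by positivity) hAn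
  -- witnesses
  set ZC : Finset W1 → Set E := fun F => {w | w ∈ K ∧ ∀ b ∈ F, 0 < fG b w} with hZC
  set FS : ℕ → Finset W1 := fun mi => ((List.range (mi + 1)).map α).toFinset with hFS
  set u : ℕ → E := fun mi => pickE (ZC (FS mi)) with hu
  have hZne : ∀ mi, (ZC (FS mi)).Nonempty := by
    intro mi
    have hpos := hαpos (mi + 1)
    have hnn : ∀ z ∈ K, 0 ≤ hP fG ((List.range (mi + 1)).map α) z :=
      fun z hz => (hP_bounds (fun i z hz => hfb i z) _ z hz).1
    obtain ⟨z, hzK, hz⟩ := hq.mu_pos_witness hnn hpos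
    refine ⟨z, hzK, ?_⟩
    intro b hb
    simp only [hFS, List.mem_toFinset] at hb
    rcases le_or_gt (fG b z) 0 with h3 | h3
    · exfalso
      have hb0 : fG b z = 0 := le_antisymm h3 (hfb b z).1
      have h4 : hP fG ((List.range (mi + 1)).map α) z = 0 := by
        unfold hP
        apply List.prod_eq_zero
        rw [List.mem_map]
        exact ⟨b, hb, hb0⟩
      linarith
    · exact h3
  have humem : ∀ mi, u mi ∈ ZC (FS mi) := fun mi => pickE_mem (hZne mi)
  have huK : ∀ mi, u mi ∈ K := fun mi => (humem mi).1
  -- triangular structure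
  have hmemlt : ∀ (i : ℕ) {b : W1} (mi : ℕ), b ∈ FS mi → mi < i → b < α i := by
    intro i b mi hb hmi
    simp only [hFS, List.mem_toFinset, List.mem_map] at hb
    obtain ⟨k, hk, rfl⟩ := hb
    exact hαmono (lt_of_le_of_lt (Nat.lt_succ_iff.mp (List.mem_range.mp hk)) hmi)
  have htri0 : ∀ i mi : ℕ, i ≤ mi → rG (α i) < ψG (α i) (u mi) := by
    intro i mi him
    have h5 : 0 < fG (α i) (u mi) := by
      apply (humem mi).2
      simp only [hFS, List.mem_toFinset, List.mem_map]
      exact ⟨i, List.mem_range.mpr (Nat.lt_succ_of_le him), rfl⟩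
    by_contra hle
    push_neg at hle
    have h7 := hvan (α i) (u mi) (huK mi) hle
    linarith
  have htri1 : ∀ i mi : ℕ, mi < i → ψG (α i) (u mi) = 0 := by
    intro i mi hmi
    apply hker (α i)
    refine ⟨FS mi, fun b hb => hmemlt i mi hb hmi, ?_⟩
    have hseteq : ZsetI K (α i) (fun j _ => GFun m act y j) (FS mi) = ZC (FS mi) := by
      ext w
      simp only [ZsetI, hZC, Set.mem_setOf_eq]
      constructor
      · rintro ⟨hwK, hw⟩
        exact ⟨hwK, fun b hb => hw b (hmemlt i mi hb hmi) hb⟩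
      · rintro ⟨hwK, hw⟩
        exact ⟨hwK, fun b hbi hbF => hw b hbF⟩
    rw [hseteq]
  -- ultrafilter endgame
  set U : Ultrafilter ℕ := Filter.hyperfilter ℕ with hUdef
  have hUcof : ∀ s : Set ℕ, sᶜ.Finite → s ∈ (U : Filter ℕ) := by
    intro s hs
    have h8 := Filter.compl_mem_hyperfilter_of_finite hs
    rwa [compl_compl] at h8
  have hprin : ↑(U.map u) ≤ Filter.principal K := by
    rw [Ultrafilter.coe_map, Filter.le_principal_iff, Filter.mem_map]
    have h9 : u ⁻¹' K = Set.univ := Set.eq_univ_of_forall (fun mi => huK mi)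
    rw [h9]
    exact Filter.univ_mem
  obtain ⟨ustar, hustarK, hule⟩ :=
    @IsCompact.ultrafilter_le_nhds E (weakTop ℝ E) K hq.hcomp (U.map u) hprin
  have htendu : Filter.Tendsto u (U : Filter ℕ) (@nhds E (weakTop ℝ E) ustar) := by
    rw [Filter.Tendsto, ← Ultrafilter.coe_map]
    exact hule
  have hcont : ∀ φ : E →L[ℝ] ℝ,
      Filter.Tendsto (fun mi => φ (u mi)) (U : Filter ℕ) (nhds (φ ustar)) := by
    intro φ
    have h10 : Filter.Tendsto φ (@nhds E (weakTop ℝ E) ustar) (nhds (φ ustar)) :=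
      @Continuous.tendsto E ℝ (weakTop ℝ E) _ φ (weakTop_cont φ) ustar
    exact h10.comp htendu
  -- pointwise ultrafilter limit of the functionals
  have hlim : ∀ z : E, ∃ L : ℝ,
      Filter.Tendsto (fun i => ψG (α i) z) (U : Filter ℕ) (nhds L) ∧ |L| ≤ ‖z‖ := by
    intro z
    have hcb : (fun i : ℕ => ψG (α i) z) ⁻¹' Set.Icc (-‖z‖) ‖z‖ = Set.univ := by
      refine Set.eq_univ_of_forall (fun i => ?_)
      have h11 := abs_le.mp (hψb (α i) z)
      exact ⟨h11.1, h11.2⟩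
    have hpr : ↑(U.map fun i : ℕ => ψG (α i) z) ≤ Filter.principal (Set.Icc (-‖z‖) ‖z‖) := by
      rw [Ultrafilter.coe_map, Filter.le_principal_iff, Filter.mem_map, hcb]
      exact Filter.univ_mem
    obtain ⟨L, hL1, hL2⟩ := (isCompact_Icc (a := -‖z‖) (b := ‖z‖)).ultrafilter_le_nhds _ hpr
    refine ⟨L, ?_, abs_le.mpr ⟨hL1.1, hL1.2⟩⟩
    rw [Filter.Tendsto, ← Ultrafilter.coe_map]
    exact hL2
  choose ψs hψs hψsb using hlim
  have hadd : ∀ z w : E, ψs (z + w) = ψs z + ψs w := by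
    intro z w
    have h12 : Filter.Tendsto (fun i => ψG (α i) (z + w)) (U : Filter ℕ)
        (nhds (ψs z + ψs w)) := by
      have h13 := (hψs z).add (hψs w)
      have h14 : (fun i => ψG (α i) z + ψG (α i) w) = fun i => ψG (α i) (z + w) := by
        funext i
        rw [← map_add]
      rwa [h14] at h13
    exact tendsto_nhds_unique (hψs (z + w)) h12
  have hsmul : ∀ (t : ℝ) (z : E), ψs (t • z) = t * ψs z := by
    intro t z
    have h15 : Filter.Tendsto (fun i => ψG (α i) (t • z)) (U : Filter ℕ)
        (nhds (t * ψs z)) := by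
      have h16 := (hψs z).const_mul t
      have h17 : (fun i => t * ψG (α i) z) = fun i => ψG (α i) (t • z) := by
        funext i
        rw [map_smul, smul_eq_mul]
      rwa [h17] at h16
    exact tendsto_nhds_unique (hψs (t • z)) h15
  set ψstar : E →L[ℝ] ℝ :=
    LinearMap.mkContinuous
      { toFun := ψs, map_add' := hadd, map_smul' := by intro t z; simpa using hsmul t z } 1
      (fun z => by rw [one_mul, Real.norm_eq_abs]; exact hψsb z) with hψstardef
  have hψstar_apply : ∀ z : E, ψstar z = ψs z := fun z => rfl
  have hc0 : (0 : ℝ) < 1 / ((p : ℝ) + 1) := by positivity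
  have hi1 : ∀ i : ℕ, 1 / ((p : ℝ) + 1) ≤ ψG (α i) ustar := by
    intro i
    refine ge_of_tendsto (hcont (ψG (α i))) ?_
    have hcofin : {mi : ℕ | i ≤ mi} ∈ (U : Filter ℕ) := by
      apply hUcof
      have h18 : {mi : ℕ | i ≤ mi}ᶜ = {mi : ℕ | mi < i} := by
        ext mi
        simp [not_le]
      rw [h18]
      exact Set.finite_lt_nat i
    filter_upwards [hcofin] with mi him
    have h19 := htri0 i mi him
    have h20 : 1 / ((p : ℝ) + 1) ≤ rG (α i) := hAr (α i) (hαA i)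
    linarith
  have hi2 : 1 / ((p : ℝ) + 1) ≤ ψs ustar :=
    ge_of_tendsto (hψs ustar) (Filter.Eventually.of_forall hi1)
  have hi3 : ∀ mi : ℕ, ψs (u mi) = 0 := by
    intro mi
    refine tendsto_nhds_unique (hψs (u mi)) ?_
    have hcofin2 : {i : ℕ | mi < i} ∈ (U : Filter ℕ) := by
      apply hUcof
      have h21 : {i : ℕ | mi < i}ᶜ = {i : ℕ | i ≤ mi} := by
        ext i
        simp [not_lt]
      rw [h21]
      exact Set.finite_le_nat mi
    have h22 : (fun _ : ℕ => (0 : ℝ)) =ᶠ[(U : Filter ℕ)] fun i => ψG (α i) (u mi) := by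
      filter_upwards [hcofin2] with i hi
      exact (htri1 i mi hi).symm
    exact Filter.Tendsto.congr' h22 tendsto_const_nhds
  have hi4 : ψs ustar = 0 := by
    have h23 := hcont ψstar
    have h24 : (fun mi => ψstar (u mi)) = fun _ : ℕ => (0 : ℝ) :=
      funext fun mi => by rw [hψstar_apply]; exact hi3 mi
    rw [h24] at h23
    have h25 : ψstar ustar = 0 := tendsto_nhds_unique h23 tendsto_const_nhds
    rwa [hψstar_apply] at h25
  linarith

end Part9b

/-- Lemma `Lem`: Let `X` be a norm-closed translation-invariant linear
subspace of `ℓ^∞(S)` containing the constants. If `S` acts on a nonempty weakly compact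
subset `K` of a Banach space `E` so that the action is weakly separately continuous, there
is `y ∈ K` such that `s ↦ f (s • y)` belongs to `X` for every weakly continuous
`f : K → ℂ`, and `X` has a left invariant mean, then there exists a nonempty weakly
compact, norm-separable subset `K₀` of `K` with `s • K₀ = K₀` for every `s ∈ S`. -/
theorem exists_invariant_separable_subset (S : Type*) [Semigroup S] [TopologicalSpace S]
    [T2Space S] [SemitopoSemigroup S]
    (X : Set (S → ℂ)) (hX : IsTransInvSubspace X)
    (E : Type*) [NormedAddCommGroup E] [NormedSpace ℝ E] [CompleteSpace E]
    (K : Set E) (act : S → E → E)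
    (hne : K.Nonempty) (hcomp : @IsCompact E (weakTop ℝ E) K)
    (hact : IsActionOn act K) (hsc : WeaklySepContOn act K)
    (y : K) (hy : ∀ f : E → ℂ, @ContinuousOn E ℂ (weakTop ℝ E) _ f K →
      (fun s : S => f (act s y)) ∈ X)
    (hLIM : HasLIM X) :
    ∃ K₀ ⊆ K, K₀.Nonempty ∧ @IsCompact E (weakTop ℝ E) K₀ ∧
      TopologicalSpace.IsSeparable K₀ ∧ ∀ s : S, act s '' K₀ = K₀ := by
  obtain ⟨m, hm⟩ := hLIM
  rcases isEmpty_or_nonempty S with hS | hS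
  · exfalso
    have h1 := hm.norm_le _ (hX.const_mem 1)
    rw [hm.map_one] at h1
    have h2 : supNorm (fun _ : S => (1 : ℂ)) = 0 := by
      unfold supNorm
      exact Real.iSup_of_isEmpty _
    rw [h2] at h1
    norm_num at h1
  · have hq : MuHyp X m act K y := ⟨hm, hX, hy, hact, hsc, hcomp, hS⟩
    exact ⟨SuppM m act y, supp_sub, supp_nonempty hq, supp_compact hcomp,
      supp_separable hq, fun s => supp_act_eq hq s⟩
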